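/- Let G(t) = 1/(1 + α − αt) be the generating function of the Geometric law with parameter p = α/(1+α), for 0 < α and t < (1+α)/α. Then t_c := min{t ≥ 0 : 2(G(t) − tG'(t))² = t²G(t)G''(t)} equals (1+α)/(3α), and the subcriticality inequality (t_c − 2)G(t_c) ≥ t_c(t_c − 1)G'(t_c) holds if and only if α ≤ 1/8. -/

import Mathlib

/-- For Geometric car arrivals with mean `α`, generating function
`G(t) = 1/(1 + α - α t)` on `t < (1+α)/α`, the point
`t_c = min {t ≥ 0 (in the domain) : 2 (G t - t G' t)² = t² G t G'' t}` equals
`(1+α)/(3α)`, and the subcriticality inequality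
`(t_c - 2) G(t_c) ≥ t_c (t_c - 1) G'(t_c)` holds iff `α ≤ 1/8`. -/
theorem stmt9 (α : ℝ) (hα : 0 < α)
    (G G' G'' : ℝ → ℝ)
    (hG : ∀ t, t < (1 + α) / α → G t = 1 / (1 + α - α * t))
    (hG' : ∀ t, t < (1 + α) / α → G' t = α / (1 + α - α * t) ^ 2)
    (hG'' : ∀ t, t < (1 + α) / α → G'' t = 2 * α ^ 2 / (1 + α - α * t) ^ 3) :
    IsLeast {t : ℝ | 0 ≤ t ∧ t < (1 + α) / α ∧
        2 * (G t - t * G' t) ^ 2 = t ^ 2 * G t * G'' t}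
      ((1 + α) / (3 * α)) ∧
    (((1 + α) / (3 * α) - 2) * G ((1 + α) / (3 * α))
        ≥ (1 + α) / (3 * α) * ((1 + α) / (3 * α) - 1) * G' ((1 + α) / (3 * α))
      ↔ α ≤ 1 / 8) := by
  set tc : ℝ := (1 + α) / (3 * α) with htc
  have hα1 : (0:ℝ) < 1 + α := by linarith
  have htclt : tc < (1 + α) / α := by
    rw [htc, div_lt_div_iff₀ (by positivity) hα]
    nlinarith
  have htcpos : 0 < tc := by positivity
  have hDtc : 1 + α - α * tc = 2 * (1 + α) / 3 := by
    rw [htc]; field_simp; ring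
  have hGtc := hG tc htclt
  have hG'tc := hG' tc htclt
  have hG''tc := hG'' tc htclt
  constructor
  · constructor
    · refine ⟨le_of_lt htcpos, htclt, ?_⟩
      rw [hGtc, hG'tc, hG''tc, hDtc, htc]
      have h3 : (2 * (1 + α) / 3 : ℝ) ≠ 0 := by positivity
      field_simp
      ring
    · rintro t ⟨ht0, htlt, heq⟩
      have hta : α * t < 1 + α := by
        have := (lt_div_iff₀ hα).mp htlt
        nlinarith
      have hD : 0 < 1 + α - α * t := by linarith
      rw [hG t htlt, hG' t htlt, hG'' t htlt] at heq
      have hDne : (1 + α - α * t) ≠ 0 := ne_of_gt hD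
      field_simp at heq
      have e2 : ((1 + α - α * t) - α * t) ^ 2 * (1 + α - α * t) ^ 6
          = (α * t) ^ 2 * (1 + α - α * t) ^ 6 := by linear_combination (1 + α - α * t) ^ 6 * heq
      have e3 := mul_right_cancel₀ (pow_ne_zero 6 hDne) e2
      have key : (1 + α - 3 * α * t) * (1 + α - α * t) = 0 := by
        linear_combination e3
      have h1 : 1 + α - 3 * α * t = 0 := by
        rcases mul_eq_zero.mp key with h | h
        · exact h
        · exact absurd h hDne
      have : t = tc := by
        rw [htc]; field_simp; linarith
      rw [this]
  · rw [hGtc, hG'tc, hDtc, ge_iff_le, ← sub_nonneg]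
    have hkey : (tc - 2) * (1 / (2 * (1 + α) / 3))
        - tc * (tc - 1) * (α / (2 * (1 + α) / 3) ^ 2)
        = (1 - 8 * α) / (4 * α * (1 + α)) := by
      rw [htc]; field_simp; ring
    rw [hkey]
    constructor
    · intro h
      by_contra hc
      push_neg at hc
      have : (1 - 8 * α) / (4 * α * (1 + α)) < 0 :=
        div_neg_of_neg_of_pos (by linarith) (by positivity)
      linarith
    · intro h
      exact div_nonneg (by linarith) (by positivity)
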